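/- Let p, q > 0 and let φ = (φ_1,…,φ_n) be a holomorphic self-map of U^n. The composition operator C_φ maps B^p(U^n) boundedly into B^q(U^n) (i.e., f∘φ ∈ B^q(U^n) for all f ∈ B^p(U^n) and there is C with ‖f∘φ‖_q ≤ C‖f‖_p for all such f) if and only if there exists a constant C such that Σ_{k,l=1}^n |∂φ_l/∂z_k(z)| · (1−|z_k|²)^q/(1−|φ_l(z)|²)^p ≤ C for all z ∈ U^n. -/

import Mathlib

open Metric Set Filter

noncomputable section

def polydisc (n : ℕ) : Set (Fin n → ℂ) := {z | ∀ j, ‖z j‖ < 1}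

def blochSum (n : ℕ) (p : ℝ) (f : (Fin n → ℂ) → ℂ) (z : Fin n → ℂ) : ℝ :=
  ∑ k : Fin n, ‖fderiv ℂ f z (Pi.single k 1)‖ * (1 - ‖z k‖ ^ 2) ^ p

def blochNorm (n : ℕ) (p : ℝ) (f : (Fin n → ℂ) → ℂ) : ℝ :=
  ‖f 0‖ + sSup (blochSum n p f '' polydisc n)

def MemBloch (n : ℕ) (p : ℝ) (f : (Fin n → ℂ) → ℂ) : Prop :=
  DifferentiableOn ℂ f (polydisc n) ∧ BddAbove (blochSum n p f '' polydisc n)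

def IsPolyFn (n : ℕ) (g : (Fin n → ℂ) → ℂ) : Prop :=
  ∃ P : MvPolynomial (Fin n) ℂ, ∀ z, g z = MvPolynomial.eval z P

def MemLittleBloch (n : ℕ) (p : ℝ) (f : (Fin n → ℂ) → ℂ) : Prop :=
  MemBloch n p f ∧ ∀ ε : ℝ, 0 < ε →
    ∃ g, IsPolyFn n g ∧ blochNorm n p (fun z => f z - g z) < ε

def MemLittleStarBloch (n : ℕ) (p : ℝ) (f : (Fin n → ℂ) → ℂ) : Prop :=
  MemBloch n p f ∧ ∀ z : ℕ → Fin n → ℂ, (∀ j, z j ∈ polydisc n) →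
    (∀ k, Tendsto (fun j => ‖z j k‖) atTop (nhds 1)) →
    Tendsto (fun j => blochSum n p f (z j)) atTop (nhds 0)

def HoloSelfMap (n : ℕ) (φ : (Fin n → ℂ) → Fin n → ℂ) : Prop :=
  DifferentiableOn ℂ φ (polydisc n) ∧ ∀ z ∈ polydisc n, φ z ∈ polydisc n

def compSum (n : ℕ) (p q : ℝ) (φ : (Fin n → ℂ) → Fin n → ℂ) (z : Fin n → ℂ) : ℝ :=
  ∑ k : Fin n, ∑ l : Fin n, ‖fderiv ℂ φ z (Pi.single k 1) l‖ *
    ((1 - ‖z k‖ ^ 2) ^ q / (1 - ‖φ z l‖ ^ 2) ^ p)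

/-! ### Auxiliary lemmas -/

lemma polydisc_eq (n : ℕ) : polydisc n = Metric.ball (0 : Fin n → ℂ) 1 := by
  ext z
  simp only [polydisc, mem_setOf_eq, Metric.mem_ball, dist_zero_right]
  rw [pi_norm_lt_iff one_pos]

lemma isOpen_polydisc (n : ℕ) : IsOpen (polydisc n) := by
  rw [polydisc_eq]; exact isOpen_ball

lemma zero_mem_polydisc (n : ℕ) : (0 : Fin n → ℂ) ∈ polydisc n := fun j => by simp

lemma one_sub_sq_pos {z : ℂ} (h : ‖z‖ < 1) : 0 < 1 - ‖z‖ ^ 2 := by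
  nlinarith [norm_nonneg z]

lemma clm_apply_eq_sum {n : ℕ} (L : (Fin n → ℂ) →L[ℂ] ℂ) (v : Fin n → ℂ) :
    L v = ∑ l, v l * L (Pi.single l 1) := by
  conv_lhs => rw [← Finset.univ_sum_single v, map_sum]
  refine Finset.sum_congr rfl fun l _ => ?_
  have : (Pi.single l (v l) : Fin n → ℂ) = v l • (Pi.single l 1 : Fin n → ℂ) := by
    rw [← Pi.single_smul]; simp
  rw [this, map_smul, smul_eq_mul]

lemma blochSum_nonneg {n : ℕ} {p : ℝ} {f : (Fin n → ℂ) → ℂ} {z : Fin n → ℂ}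
    (hz : z ∈ polydisc n) : 0 ≤ blochSum n p f z := by
  refine Finset.sum_nonneg fun k _ => mul_nonneg (norm_nonneg _) ?_
  exact Real.rpow_nonneg (one_sub_sq_pos (hz k)).le _

lemma sSup_bloch_nonneg {n : ℕ} {p : ℝ} {f : (Fin n → ℂ) → ℂ}
    (hf : BddAbove (blochSum n p f '' polydisc n)) :
    0 ≤ sSup (blochSum n p f '' polydisc n) :=
  le_trans (blochSum_nonneg (zero_mem_polydisc n))
    (le_csSup hf ⟨0, zero_mem_polydisc n, rfl⟩)

lemma blochSum_le_sSup {n : ℕ} {p : ℝ} {f : (Fin n → ℂ) → ℂ}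
    (hf : BddAbove (blochSum n p f '' polydisc n))
    {z : Fin n → ℂ} (hz : z ∈ polydisc n) :
    blochSum n p f z ≤ sSup (blochSum n p f '' polydisc n) :=
  le_csSup hf ⟨z, hz, rfl⟩

lemma sSup_bloch_le {n : ℕ} {p : ℝ} {f : (Fin n → ℂ) → ℂ} {B : ℝ}
    (hB : ∀ z ∈ polydisc n, blochSum n p f z ≤ B) :
    sSup (blochSum n p f '' polydisc n) ≤ B :=
  csSup_le ⟨_, ⟨0, zero_mem_polydisc n, rfl⟩⟩ (by rintro x ⟨z, hz, rfl⟩; exact hB z hz)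

lemma term_le_blochSum {n : ℕ} {p : ℝ} {f : (Fin n → ℂ) → ℂ} {z : Fin n → ℂ}
    (hz : z ∈ polydisc n) (l : Fin n) :
    ‖fderiv ℂ f z (Pi.single l 1)‖ * (1 - ‖z l‖ ^ 2) ^ p
      ≤ blochSum n p f z := by
  unfold blochSum
  refine Finset.single_le_sum
    (f := fun k => ‖fderiv ℂ f z (Pi.single k 1)‖ *
      (1 - ‖z k‖ ^ 2) ^ p)
    (fun k _ => mul_nonneg (norm_nonneg _)
      (Real.rpow_nonneg (one_sub_sq_pos (hz k)).le _)) (Finset.mem_univ l)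

lemma blochNorm_nonneg {n : ℕ} {p : ℝ} {f : (Fin n → ℂ) → ℂ} (hf : MemBloch n p f) :
    0 ≤ blochNorm n p f :=
  add_nonneg (norm_nonneg _) (sSup_bloch_nonneg hf.2)

lemma sSup_le_blochNorm {n : ℕ} {p : ℝ} {f : (Fin n → ℂ) → ℂ} :
    sSup (blochSum n p f '' polydisc n) ≤ blochNorm n p f :=
  le_add_of_nonneg_left (norm_nonneg _)

/-! ### fderiv computations -/

lemma fderiv_single_var {n : ℕ} {g : ℂ → ℂ} {g' : ℂ} {l : Fin n} {z : Fin n → ℂ}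
    (hg : HasDerivAt g g' (z l)) (k : Fin n) :
    fderiv ℂ (fun z : Fin n → ℂ => g (z l)) z (Pi.single k 1)
      = g' * (if l = k then 1 else 0) := by
  have hp : HasFDerivAt (fun z : Fin n → ℂ => z l)
      (ContinuousLinearMap.proj l : (Fin n → ℂ) →L[ℂ] ℂ) z := by
    exact (ContinuousLinearMap.proj (R := ℂ) (φ := fun _ : Fin n => ℂ) l).hasFDerivAt
  have h : HasFDerivAt (fun z : Fin n → ℂ => g (z l))
      (g' • (ContinuousLinearMap.proj l : (Fin n → ℂ) →L[ℂ] ℂ)) z :=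
    hg.comp_hasFDerivAt z hp
  rw [h.fderiv]
  simp [Pi.single_apply, smul_eq_mul]

lemma fderiv_comp_single {n : ℕ} {φ : (Fin n → ℂ) → Fin n → ℂ} {z : Fin n → ℂ}
    (hφd : DifferentiableAt ℂ φ z) {g : ℂ → ℂ} {g' : ℂ} {l : Fin n}
    (hg : HasDerivAt g g' (φ z l)) (k : Fin n) :
    fderiv ℂ (fun z => g (φ z l)) z (Pi.single k 1)
      = g' * (fderiv ℂ φ z (Pi.single k 1) l) := by
  have hu : HasFDerivAt (fun z => φ z l)
      ((ContinuousLinearMap.proj l : (Fin n → ℂ) →L[ℂ] ℂ).comp (fderiv ℂ φ z)) z :=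
    by exact HasFDerivAt.comp z (ContinuousLinearMap.proj l : (Fin n → ℂ) →L[ℂ] ℂ).hasFDerivAt hφd.hasFDerivAt
  have h : HasFDerivAt (fun z => g (φ z l))
      (g' • ((ContinuousLinearMap.proj l : (Fin n → ℂ) →L[ℂ] ℂ).comp (fderiv ℂ φ z))) z :=
    hg.comp_hasFDerivAt z hu
  rw [h.fderiv]
  simp [smul_eq_mul]

lemma fderiv_comp_apply' {n : ℕ} {f : (Fin n → ℂ) → ℂ} {φ : (Fin n → ℂ) → Fin n → ℂ}
    {z : Fin n → ℂ} (hfd : DifferentiableAt ℂ f (φ z)) (hφd : DifferentiableAt ℂ φ z)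
    (v : Fin n → ℂ) :
    fderiv ℂ (fun z => f (φ z)) z v = fderiv ℂ f (φ z) (fderiv ℂ φ z v) := by
  have h := (hfd.hasFDerivAt.comp z hφd.hasFDerivAt).fderiv
  rw [show (fun z => f (φ z)) = f ∘ φ from rfl, h]
  rfl

lemma blochSum_single_var {n : ℕ} {p : ℝ} {g : ℂ → ℂ} {g' : ℂ} {l : Fin n} {z : Fin n → ℂ}
    (hg : HasDerivAt g g' (z l)) :
    blochSum n p (fun z : Fin n → ℂ => g (z l)) z
      = ‖g'‖ * (1 - ‖z l‖ ^ 2) ^ p := by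
  unfold blochSum
  rw [Finset.sum_eq_single l]
  · rw [fderiv_single_var hg l]; simp
  · intro k _ hk
    rw [fderiv_single_var hg k]
    simp [Ne.symm hk]
  · intro h; exact absurd (Finset.mem_univ l) h

lemma blochSum_comp_single {n : ℕ} {q : ℝ} {φ : (Fin n → ℂ) → Fin n → ℂ} {z : Fin n → ℂ}
    (hφd : DifferentiableAt ℂ φ z) {g : ℂ → ℂ} {g' : ℂ} {l : Fin n}
    (hg : HasDerivAt g g' (φ z l)) :
    blochSum n q (fun z => g (φ z l)) z
      = ‖g'‖ *
        ∑ k, ‖fderiv ℂ φ z (Pi.single k 1) l‖ * (1 - ‖z k‖ ^ 2) ^ q := by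
  unfold blochSum
  rw [Finset.mul_sum]
  refine Finset.sum_congr rfl fun k _ => ?_
  rw [fderiv_comp_single hφd hg k, norm_mul]
  ring

/-! ### Point evaluation bound -/

lemma eval_bound {n : ℕ} {p : ℝ} (hp : 0 < p) {f : (Fin n → ℂ) → ℂ}
    (hf : MemBloch n p f) {w : Fin n → ℂ} (hw : w ∈ polydisc n) :
    ‖f w‖ ≤ ‖f 0‖ +
      (∑ k, ((1 - ‖w k‖ ^ 2) ^ p)⁻¹) * sSup (blochSum n p f '' polydisc n) := by
  set S := sSup (blochSum n p f '' polydisc n) with hS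
  have hS0 : 0 ≤ S := sSup_bloch_nonneg hf.2
  set s : Set (Fin n → ℂ) := {x | ∀ k, ‖x k‖ ≤ ‖w k‖} with hs
  have hsub : s ⊆ polydisc n := fun x hx k => lt_of_le_of_lt (hx k) (hw k)
  have hconv : Convex ℝ s := by
    intro x hx y hy a b ha hb hab k
    have : (a • x + b • y) k = a • x k + b • y k := rfl
    rw [this]
    calc ‖a • x k + b • y k‖ = ‖a • x k + b • y k‖ := rfl
      _ ≤ ‖a • x k‖ + ‖b • y k‖ := norm_add_le _ _
      _ = a * ‖x k‖ + b * ‖y k‖ := by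
          rw [norm_smul, norm_smul]
          simp [abs_of_nonneg ha, abs_of_nonneg hb]
      _ ≤ a * ‖w k‖ + b * ‖w k‖ := by
          gcongr
          exacts [hx k, hy k]
      _ = ‖w k‖ := by rw [← add_mul, hab, one_mul]
  set M : ℝ := (∑ k, ((1 - ‖w k‖ ^ 2) ^ p)⁻¹) * S with hM
  have hMnn : 0 ≤ M := mul_nonneg (Finset.sum_nonneg fun k _ =>
    inv_nonneg.2 (Real.rpow_nonneg (one_sub_sq_pos (hw k)).le _)) hS0
  have hdiff : ∀ x ∈ s, DifferentiableAt ℂ f x := fun x hx =>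
    hf.1.differentiableAt ((isOpen_polydisc n).mem_nhds (hsub hx))
  have hbound : ∀ x ∈ s, ‖fderiv ℂ f x‖ ≤ M := by
    intro x hx
    have hxp := hsub hx
    refine ContinuousLinearMap.opNorm_le_bound _ hMnn fun v => ?_
    rw [clm_apply_eq_sum]
    calc ‖∑ l, v l * fderiv ℂ f x (Pi.single l 1)‖
        ≤ ∑ l, ‖v l * fderiv ℂ f x (Pi.single l 1)‖ := norm_sum_le _ _
      _ ≤ ∑ l, ((1 - ‖w l‖ ^ 2) ^ p)⁻¹ * S * ‖v‖ := by
          refine Finset.sum_le_sum fun l _ => ?_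
          rw [norm_mul]
          have h1 : ‖fderiv ℂ f x (Pi.single l 1)‖ ≤ ((1 - ‖w l‖ ^ 2) ^ p)⁻¹ * S := by
            have h2 : ‖fderiv ℂ f x (Pi.single l 1)‖
                * (1 - ‖x l‖ ^ 2) ^ p ≤ S :=
              le_trans (term_le_blochSum hxp l) (blochSum_le_sSup hf.2 hxp)
            have h3 : (0:ℝ) < (1 - ‖w l‖ ^ 2) ^ p :=
              Real.rpow_pos_of_pos (one_sub_sq_pos (hw l)) _
            have h4 : (1 - ‖w l‖ ^ 2) ^ p ≤ (1 - ‖x l‖ ^ 2) ^ p := by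
              apply Real.rpow_le_rpow (one_sub_sq_pos (hw l)).le _ hp.le
              have := hx l
              nlinarith [norm_nonneg (x l), norm_nonneg (w l)]
            have h5 : (0:ℝ) < (1 - ‖x l‖ ^ 2) ^ p := lt_of_lt_of_le h3 h4
            calc ‖fderiv ℂ f x (Pi.single l 1)‖
                ≤ S / (1 - ‖x l‖ ^ 2) ^ p := (le_div_iff₀ h5).2 h2
              _ ≤ S / (1 - ‖w l‖ ^ 2) ^ p :=
                  div_le_div_of_nonneg_left hS0 h3 h4
              _ = ((1 - ‖w l‖ ^ 2) ^ p)⁻¹ * S := by rw [div_eq_inv_mul]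
          calc ‖v l‖ * ‖fderiv ℂ f x (Pi.single l 1)‖
              ≤ ‖v‖ * (((1 - ‖w l‖ ^ 2) ^ p)⁻¹ * S) :=
                mul_le_mul (norm_le_pi_norm v l) h1 (norm_nonneg _) (norm_nonneg _)
            _ = ((1 - ‖w l‖ ^ 2) ^ p)⁻¹ * S * ‖v‖ := by ring
      _ = M * ‖v‖ := by rw [hM]; simp only [Finset.sum_mul]
  have key := hconv.norm_image_sub_le_of_norm_fderiv_le hdiff hbound
    (show (0 : Fin n → ℂ) ∈ s from fun k => by simp [norm_nonneg])
    (show w ∈ s from fun k => le_refl _)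
  have hw1 : ‖w - 0‖ ≤ 1 := by
    rw [sub_zero]
    refine (pi_norm_le_iff_of_nonneg zero_le_one).2 fun k => (hw k).le
  calc ‖f w‖ = ‖f 0 + (f w - f 0)‖ := by ring_nf
    _ ≤ ‖f 0‖ + ‖f w - f 0‖ := norm_add_le _ _
    _ ≤ ‖f 0‖ + M * ‖w - 0‖ := by gcongr
    _ ≤ ‖f 0‖ + M * 1 := by gcongr
    _ = ‖f 0‖ + (∑ k, ((1 - ‖w k‖ ^ 2) ^ p)⁻¹) * S := by rw [mul_one]

/-! ### Backward direction -/

lemma compSum_nonneg {n : ℕ} {p q : ℝ} {φ : (Fin n → ℂ) → Fin n → ℂ}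
    (hφ : HoloSelfMap n φ) {z : Fin n → ℂ} (hz : z ∈ polydisc n) :
    0 ≤ compSum n p q φ z := by
  refine Finset.sum_nonneg fun k _ => Finset.sum_nonneg fun l _ =>
    mul_nonneg (norm_nonneg _) (div_nonneg ?_ ?_)
  · exact Real.rpow_nonneg (one_sub_sq_pos (hz k)).le _
  · exact Real.rpow_nonneg (one_sub_sq_pos (hφ.2 z hz l)).le _

lemma comp_blochSum_le {n : ℕ} {p q : ℝ} {φ : (Fin n → ℂ) → Fin n → ℂ}
    (hφ : HoloSelfMap n φ) {f : (Fin n → ℂ) → ℂ}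
    (hf : MemBloch n p f) {z : Fin n → ℂ} (hz : z ∈ polydisc n) :
    blochSum n q (fun z => f (φ z)) z
      ≤ sSup (blochSum n p f '' polydisc n) * compSum n p q φ z := by
  set S := sSup (blochSum n p f '' polydisc n) with hS
  have hS0 : 0 ≤ S := sSup_bloch_nonneg hf.2
  have hφz : φ z ∈ polydisc n := hφ.2 z hz
  have hfd : DifferentiableAt ℂ f (φ z) :=
    hf.1.differentiableAt ((isOpen_polydisc n).mem_nhds hφz)
  have hφd : DifferentiableAt ℂ φ z :=
    hφ.1.differentiableAt ((isOpen_polydisc n).mem_nhds hz)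
  have step1 : ∀ k : Fin n, ‖fderiv ℂ (fun z => f (φ z)) z (Pi.single k 1)‖
      ≤ ∑ l, ‖fderiv ℂ φ z (Pi.single k 1) l‖ *
          ‖fderiv ℂ f (φ z) (Pi.single l 1)‖ := by
    intro k
    rw [fderiv_comp_apply' hfd hφd, clm_apply_eq_sum]
    refine le_trans (norm_sum_le _ _) (Finset.sum_le_sum fun l _ => ?_)
    rw [norm_mul]
  calc blochSum n q (fun z => f (φ z)) z
      ≤ ∑ k, (∑ l, ‖fderiv ℂ φ z (Pi.single k 1) l‖ *
          ‖fderiv ℂ f (φ z) (Pi.single l 1)‖) * (1 - ‖z k‖ ^ 2) ^ q := by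
        refine Finset.sum_le_sum fun k _ => ?_
        exact mul_le_mul_of_nonneg_right (step1 k)
          (Real.rpow_nonneg (one_sub_sq_pos (hz k)).le _)
    _ = ∑ k, ∑ l, (‖fderiv ℂ φ z (Pi.single k 1) l‖ *
          ‖fderiv ℂ f (φ z) (Pi.single l 1)‖) * (1 - ‖z k‖ ^ 2) ^ q := by
        simp only [Finset.sum_mul]
    _ ≤ ∑ k, ∑ l, S * (‖fderiv ℂ φ z (Pi.single k 1) l‖ *
          ((1 - ‖z k‖ ^ 2) ^ q / (1 - ‖φ z l‖ ^ 2) ^ p)) := by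
        refine Finset.sum_le_sum fun k _ => Finset.sum_le_sum fun l _ => ?_
        have hP : (0:ℝ) < (1 - ‖φ z l‖ ^ 2) ^ p :=
          Real.rpow_pos_of_pos (one_sub_sq_pos (hφz l)) _
        have hA : ‖fderiv ℂ f (φ z) (Pi.single l 1)‖ *
            (1 - ‖φ z l‖ ^ 2) ^ p ≤ S :=
          le_trans (term_le_blochSum hφz l) (blochSum_le_sSup hf.2 hφz)
        have hfac : (0:ℝ) ≤ ‖fderiv ℂ φ z (Pi.single k 1) l‖ *
            ((1 - ‖z k‖ ^ 2) ^ q / (1 - ‖φ z l‖ ^ 2) ^ p) :=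
          mul_nonneg (norm_nonneg _)
            (div_nonneg (Real.rpow_nonneg (one_sub_sq_pos (hz k)).le _) hP.le)
        have heq : (‖fderiv ℂ φ z (Pi.single k 1) l‖ *
            ‖fderiv ℂ f (φ z) (Pi.single l 1)‖) * (1 - ‖z k‖ ^ 2) ^ q
            = (‖fderiv ℂ f (φ z) (Pi.single l 1)‖ *
                (1 - ‖φ z l‖ ^ 2) ^ p) *
              (‖fderiv ℂ φ z (Pi.single k 1) l‖ *
                ((1 - ‖z k‖ ^ 2) ^ q / (1 - ‖φ z l‖ ^ 2) ^ p)) := by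
          field_simp
        rw [heq]
        exact mul_le_mul_of_nonneg_right hA hfac
    _ = S * compSum n p q φ z := by
        unfold compSum
        rw [Finset.mul_sum]
        exact Finset.sum_congr rfl fun k _ => by rw [Finset.mul_sum]

lemma backward_full {n : ℕ} {p q : ℝ} {φ : (Fin n → ℂ) → Fin n → ℂ}
    (hp : 0 < p) (hφ : HoloSelfMap n φ) {C : ℝ}
    (hC : ∀ z ∈ polydisc n, compSum n p q φ z ≤ C) :
    (∀ f, MemBloch n p f → MemBloch n q (fun z => f (φ z))) ∧
      ∃ C' : ℝ, ∀ f, MemBloch n p f →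
        blochNorm n q (fun z => f (φ z)) ≤ C' * blochNorm n p f := by
  have hC0 : 0 ≤ C :=
    le_trans (compSum_nonneg hφ (zero_mem_polydisc n)) (hC 0 (zero_mem_polydisc n))
  have hφ0 : φ 0 ∈ polydisc n := hφ.2 0 (zero_mem_polydisc n)
  set K : ℝ := ∑ k, ((1 - ‖φ 0 k‖ ^ 2) ^ p)⁻¹ with hK
  have hK0 : 0 ≤ K := Finset.sum_nonneg fun k _ =>
    inv_nonneg.2 (Real.rpow_nonneg (one_sub_sq_pos (hφ0 k)).le _)
  have main : ∀ f, MemBloch n p f → MemBloch n q (fun z => f (φ z)) := by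
    intro f hf
    refine ⟨hf.1.comp hφ.1 hφ.2, ⟨sSup (blochSum n p f '' polydisc n) * C, ?_⟩⟩
    rintro x ⟨z, hz, rfl⟩
    exact le_trans (comp_blochSum_le hφ hf hz)
      (mul_le_mul_of_nonneg_left (hC z hz) (sSup_bloch_nonneg hf.2))
  refine ⟨main, ⟨1 + K + C, fun f hf => ?_⟩⟩
  set S := sSup (blochSum n p f '' polydisc n) with hS
  have hS0 : 0 ≤ S := sSup_bloch_nonneg hf.2
  have h1 : ‖f (φ 0)‖ ≤ ‖f 0‖ + K * S := eval_bound hp hf hφ0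
  have h2 : sSup (blochSum n q (fun z => f (φ z)) '' polydisc n) ≤ S * C :=
    sSup_bloch_le fun z hz => le_trans (comp_blochSum_le hφ hf hz)
      (mul_le_mul_of_nonneg_left (hC z hz) hS0)
  have h3 : (0:ℝ) ≤ ‖f 0‖ := norm_nonneg _
  unfold blochNorm
  rw [← hS]
  show ‖f (φ 0)‖ + _ ≤ _
  nlinarith [h1, h2, h3, hS0, hK0, hC0]

/-! ### Test functions -/

def cc (p : ℝ) : ℂ := (1 - (p : ℂ)) + Complex.I

lemma cc_abs (p : ℝ) : 1 ≤ ‖cc p‖ := by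
  have h : (cc p).im = 1 := by simp [cc]
  have := Complex.abs_im_le_norm (cc p)
  rw [h] at this; simpa using this

lemma cc_sub_one_re (p : ℝ) : (cc p - 1).re = -p := by simp [cc]
lemma cc_sub_one_im (p : ℝ) : (cc p - 1).im = 1 := by simp [cc]

lemma zw_re_pos {a w : ℂ} (ha : ‖a‖ ≤ 1) (hw : ‖w‖ < 1) :
    0 < (1 - (starRingEnd ℂ) a * w).re := by
  have h1 : ((starRingEnd ℂ) a * w).re ≤ ‖(starRingEnd ℂ) a * w‖ :=
    Complex.re_le_norm _
  have h2 : ‖(starRingEnd ℂ) a * w‖ = ‖a‖ * ‖w‖ := by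
    rw [norm_mul, Complex.norm_conj]
  have h3 : ‖a‖ * ‖w‖ < 1 := by
    rcases eq_or_lt_of_le (norm_nonneg a) with h | h
    · simp [← h]
    · calc ‖a‖ * ‖w‖ ≤ 1 * ‖w‖ := by
            exact mul_le_mul_of_nonneg_right ha (norm_nonneg w)
        _ < 1 := by simpa using hw
  have : (1 - (starRingEnd ℂ) a * w).re = 1 - ((starRingEnd ℂ) a * w).re := by simp
  rw [this]; linarith [h1, h2 ▸ h1]
  
lemma zw_ne_zero {a w : ℂ} (ha : ‖a‖ ≤ 1) (hw : ‖w‖ < 1) :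
    1 - (starRingEnd ℂ) a * w ≠ 0 := by
  intro h
  have := zw_re_pos ha hw
  rw [h] at this; simp at this

lemma hasDerivAt_g (p : ℝ) {a w : ℂ} (ha : ‖a‖ ≤ 1) (hw : ‖w‖ < 1) :
    HasDerivAt (fun w => (1 - (starRingEnd ℂ) a * w) ^ cc p)
      (cc p * (1 - (starRingEnd ℂ) a * w) ^ (cc p - 1) * -((starRingEnd ℂ) a)) w := by
  have hbase : HasDerivAt (fun w : ℂ => 1 - (starRingEnd ℂ) a * w) (-((starRingEnd ℂ) a)) w := by
    have h1 : HasDerivAt (fun w : ℂ => (starRingEnd ℂ) a * w) ((starRingEnd ℂ) a) w := by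
      simpa using (hasDerivAt_id w).const_mul ((starRingEnd ℂ) a)
    simpa using h1.const_sub 1
  exact hbase.cpow_const (Or.inl (zw_re_pos ha hw))

lemma abs_g' (p : ℝ) {a w : ℂ} (ha : ‖a‖ ≤ 1) (hw : ‖w‖ < 1) :
    ‖cc p * (1 - (starRingEnd ℂ) a * w) ^ (cc p - 1) * -((starRingEnd ℂ) a)‖
      = ‖cc p‖ *
        (‖1 - (starRingEnd ℂ) a * w‖ ^ (-p) /
          Real.exp ((1 - (starRingEnd ℂ) a * w).arg)) * ‖a‖ := by
  rw [norm_mul, norm_mul, norm_neg, Complex.norm_conj,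
    Complex.norm_cpow_of_ne_zero (zw_ne_zero ha hw), cc_sub_one_re, cc_sub_one_im, mul_one]


lemma g'_bound (p : ℝ) (hp : 0 < p) {a w : ℂ} (ha : ‖a‖ ≤ 1)
    (hw : ‖w‖ < 1) :
    ‖cc p‖ *
        (‖1 - (starRingEnd ℂ) a * w‖ ^ (-p) /
          Real.exp ((1 - (starRingEnd ℂ) a * w).arg)) * ‖a‖ *
      (1 - ‖w‖ ^ 2) ^ p
    ≤ ‖cc p‖ * ((2:ℝ) ^ p * Real.exp Real.pi) := by
  set r := ‖1 - (starRingEnd ℂ) a * w‖ with hr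
  set t := 1 - ‖w‖ ^ 2 with ht
  set E := Real.exp ((1 - (starRingEnd ℂ) a * w).arg) with hE
  have hrpos : 0 < r := norm_pos_iff.2 (zw_ne_zero ha hw)
  have hr1 : 1 - ‖w‖ ≤ r := by
    have htri : ‖(1:ℂ)‖ ≤ ‖1 - (starRingEnd ℂ) a * w‖
        + ‖(starRingEnd ℂ) a * w‖ := by
      calc ‖(1:ℂ)‖ = ‖(1 - (starRingEnd ℂ) a * w) + (starRingEnd ℂ) a * w‖ := by
            ring_nf
        _ ≤ _ := norm_add_le _ _
    have h2 : ‖(starRingEnd ℂ) a * w‖ ≤ ‖w‖ := by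
      rw [norm_mul, Complex.norm_conj]
      calc ‖a‖ * ‖w‖ ≤ 1 * ‖w‖ :=
            mul_le_mul_of_nonneg_right ha (norm_nonneg w)
        _ = ‖w‖ := one_mul _
    simp only [norm_one] at htri
    linarith
  have htpos : 0 < t := one_sub_sq_pos hw
  have ht2r : t ≤ 2 * r := by
    have : t = (1 - ‖w‖) * (1 + ‖w‖) := by ring
    nlinarith [norm_nonneg w, hw, hr1]
  have h1 : r ^ (-p) * t ^ p ≤ (2:ℝ) ^ p := by
    have htp : t ^ p ≤ (2:ℝ) ^ p * r ^ p := by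
      rw [← Real.mul_rpow (by norm_num) hrpos.le]
      exact Real.rpow_le_rpow htpos.le ht2r hp.le
    rw [Real.rpow_neg hrpos.le]
    have hrp : (0:ℝ) < r ^ p := Real.rpow_pos_of_pos hrpos _
    calc (r ^ p)⁻¹ * t ^ p ≤ (r ^ p)⁻¹ * ((2:ℝ) ^ p * r ^ p) := by
          exact mul_le_mul_of_nonneg_left htp (inv_nonneg.2 hrp.le)
      _ = (2:ℝ) ^ p := by field_simp
  have hEpos : 0 < E := Real.exp_pos _
  have h2 : E⁻¹ ≤ Real.exp Real.pi := by
    rw [← Real.exp_neg]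
    exact Real.exp_le_exp.2 (by linarith [Complex.neg_pi_lt_arg (1 - (starRingEnd ℂ) a * w)])
  calc ‖cc p‖ * (r ^ (-p) / E) * ‖a‖ * t ^ p
      = ‖cc p‖ * ((r ^ (-p) * t ^ p) * E⁻¹ * ‖a‖) := by
        rw [div_eq_mul_inv]; ring
    _ ≤ ‖cc p‖ * ((2:ℝ) ^ p * Real.exp Real.pi * 1) := by
        gcongr
    _ = ‖cc p‖ * ((2:ℝ) ^ p * Real.exp Real.pi) := by ring

lemma zw_at_a {a : ℂ} : 1 - (starRingEnd ℂ) a * a = ((1 - ‖a‖ ^ 2 : ℝ) : ℂ) := by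
  have : (starRingEnd ℂ) a * a = ((‖a‖ ^ 2 : ℝ) : ℂ) := by
    rw [mul_comm, Complex.mul_conj, Complex.normSq_eq_norm_sq]
  rw [this]; push_cast; ring

lemma abs_g'_at_a (p : ℝ) {a : ℂ} (ha : ‖a‖ < 1) :
    ‖cc p‖ *
        (‖1 - (starRingEnd ℂ) a * a‖ ^ (-p) /
          Real.exp ((1 - (starRingEnd ℂ) a * a).arg)) * ‖a‖
      = ‖cc p‖ * ‖a‖ * ((1 - ‖a‖ ^ 2) ^ p)⁻¹ := by
  have hpos := one_sub_sq_pos ha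
  rw [zw_at_a, Complex.arg_ofReal_of_nonneg hpos.le, Real.exp_zero, div_one,
    Complex.norm_real, Real.norm_eq_abs, abs_of_pos hpos, Real.rpow_neg hpos.le]
  ring

lemma memBloch_single_var {n : ℕ} {p : ℝ} {g : ℂ → ℂ} {g' : ℂ → ℂ} (l : Fin n)
    (hder : ∀ w : ℂ, ‖w‖ < 1 → HasDerivAt g (g' w) w)
    {M : ℝ}
    (hM : ∀ w : ℂ, ‖w‖ < 1 →
      ‖g' w‖ * (1 - ‖w‖ ^ 2) ^ p ≤ M) :
    MemBloch n p (fun z => g (z l)) ∧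
      blochNorm n p (fun z => g (z l)) ≤ ‖g 0‖ + M := by
  have hbs : ∀ z ∈ polydisc n, blochSum n p (fun z : Fin n → ℂ => g (z l)) z ≤ M := by
    intro z hz
    rw [blochSum_single_var (hder (z l) (hz l))]
    exact hM (z l) (hz l)
  have hdiff : DifferentiableOn ℂ (fun z : Fin n → ℂ => g (z l)) (polydisc n) := by
    intro z hz
    have hpj : HasFDerivAt (fun z : Fin n → ℂ => z l)
        (ContinuousLinearMap.proj l : (Fin n → ℂ) →L[ℂ] ℂ) z := by
      exact (ContinuousLinearMap.proj (R := ℂ) (φ := fun _ : Fin n => ℂ) l).hasFDerivAt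
    exact (((hder (z l) (hz l)).comp_hasFDerivAt z hpj).differentiableAt).differentiableWithinAt
  refine ⟨⟨hdiff, ⟨M, ?_⟩⟩, ?_⟩
  · rintro x ⟨z, hz, rfl⟩; exact hbs z hz
  · unfold blochNorm
    have h0 : (fun z : Fin n → ℂ => g (z l)) 0 = g 0 := rfl
    rw [h0]
    exact add_le_add_right (sSup_bloch_le hbs) _

/-! ### Forward direction -/
set_option maxHeartbeats 1000000 in

lemma forward_full {n : ℕ} {p q : ℝ} {φ : (Fin n → ℂ) → Fin n → ℂ}
    (hp : 0 < p) (hφ : HoloSelfMap n φ)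
    (H1 : ∀ f, MemBloch n p f → MemBloch n q (fun z => f (φ z)))
    {C : ℝ} (H2 : ∀ f, MemBloch n p f →
      blochNorm n q (fun z => f (φ z)) ≤ C * blochNorm n p f) :
    ∃ C' : ℝ, ∀ z ∈ polydisc n, compSum n p q φ z ≤ C' := by
  set C₀ : ℝ := max C 0 with hC₀def
  have hC₀ : 0 ≤ C₀ := le_max_right _ _
  have H2' : ∀ f, MemBloch n p f →
      blochNorm n q (fun z => f (φ z)) ≤ C₀ * blochNorm n p f := fun f hf =>
    le_trans (H2 f hf) (mul_le_mul_of_nonneg_right (le_max_left _ _) (blochNorm_nonneg hf))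
  set M : ℝ := ‖cc p‖ * ((2:ℝ) ^ p * Real.exp Real.pi) with hMdef
  have hM0 : 0 ≤ M := mul_nonneg (norm_nonneg _)
    (mul_nonneg (Real.rpow_nonneg (by norm_num) _) (Real.exp_pos _).le)
  set B : ℝ := max ((2:ℝ) ^ p * C₀) (2 * (C₀ * (1 + M))) with hBdef
  refine ⟨(n : ℝ) * B, fun z₀ hz₀ => ?_⟩
  have hφz : φ z₀ ∈ polydisc n := hφ.2 z₀ hz₀
  have hφd : DifferentiableAt ℂ φ z₀ :=
    hφ.1.differentiableAt ((isOpen_polydisc n).mem_nhds hz₀)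
  have key : ∀ l : Fin n,
      (∑ k, ‖fderiv ℂ φ z₀ (Pi.single k 1) l‖ * (1 - ‖z₀ k‖ ^ 2) ^ q)
        / (1 - ‖φ z₀ l‖ ^ 2) ^ p ≤ B := by
    intro l
    set a : ℂ := φ z₀ l with hadef
    have ha : ‖a‖ < 1 := hφz l
    set A : ℝ := ∑ k, ‖fderiv ℂ φ z₀ (Pi.single k 1) l‖ *
      (1 - ‖z₀ k‖ ^ 2) ^ q with hAdef
    have hA0 : 0 ≤ A := Finset.sum_nonneg fun k _ =>
      mul_nonneg (norm_nonneg _) (Real.rpow_nonneg (one_sub_sq_pos (hz₀ k)).le _)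
    have hP : (0:ℝ) < (1 - ‖a‖ ^ 2) ^ p :=
      Real.rpow_pos_of_pos (one_sub_sq_pos ha) _
    rcases le_or_gt (‖a‖) (1/2) with hsm | hbig
    · -- |a| ≤ 1/2 : use the coordinate function as test function
      have hder : ∀ w : ℂ, ‖w‖ < 1 →
          HasDerivAt (fun w : ℂ => w) ((fun _ : ℂ => (1:ℂ)) w) w := fun w _ => hasDerivAt_id' w
      have hMb : ∀ w : ℂ, ‖w‖ < 1 →
          ‖(fun _ : ℂ => (1:ℂ)) w‖ * (1 - ‖w‖ ^ 2) ^ p ≤ 1 := by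
        intro w hw
        simp only [norm_one, one_mul]
        exact Real.rpow_le_one (one_sub_sq_pos hw).le
          (by nlinarith [norm_nonneg w]) hp.le
      obtain ⟨hmem, hnorm⟩ := memBloch_single_var (n := n) (p := p) l hder hMb
      have hnorm' : blochNorm n p (fun z : Fin n → ℂ => z l) ≤ 1 := by
        have h0 : ‖(fun w : ℂ => w) 0‖ = 0 := by simp
        calc blochNorm n p (fun z : Fin n → ℂ => z l)
            ≤ ‖(fun w : ℂ => w) 0‖ + 1 := hnorm
          _ = 1 := by rw [h0, zero_add]
      have hcomp := H1 (fun z : Fin n → ℂ => z l) hmem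
      have hbs : blochSum n q (fun z => (fun z : Fin n → ℂ => z l) (φ z)) z₀
          = ‖(1:ℂ)‖ * A :=
        blochSum_comp_single (g := fun w : ℂ => w) (g' := 1) hφd (hasDerivAt_id' (φ z₀ l))
      have h2 : A ≤ C₀ := by
        have := calc (‖(1:ℂ)‖) * A
            = blochSum n q (fun z => (fun z : Fin n → ℂ => z l) (φ z)) z₀ := hbs.symm
          _ ≤ sSup (blochSum n q (fun z => (fun z : Fin n → ℂ => z l) (φ z)) '' polydisc n) :=
              blochSum_le_sSup hcomp.2 hz₀
          _ ≤ blochNorm n q (fun z => (fun z : Fin n → ℂ => z l) (φ z)) := sSup_le_blochNorm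
          _ ≤ C₀ * blochNorm n p (fun z : Fin n → ℂ => z l) :=
              H2' (fun z : Fin n → ℂ => z l) hmem
          _ ≤ C₀ * 1 := mul_le_mul_of_nonneg_left hnorm' hC₀
          _ = C₀ := mul_one _
        simpa using this
      refine le_trans ?_ (le_max_left _ _)
      rw [div_le_iff₀ hP]
      have h2P : 1 ≤ (2:ℝ) ^ p * (1 - ‖a‖ ^ 2) ^ p := by
        have hhalf : ((1:ℝ)/2) ^ p ≤ (1 - ‖a‖ ^ 2) ^ p := by
          apply Real.rpow_le_rpow (by norm_num) _ hp.le
          nlinarith [norm_nonneg a]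
        calc (1:ℝ) = (2:ℝ) ^ p * ((1:ℝ)/2) ^ p := by
              rw [← Real.mul_rpow (by norm_num) (by norm_num)]
              norm_num
          _ ≤ (2:ℝ) ^ p * (1 - ‖a‖ ^ 2) ^ p :=
              mul_le_mul_of_nonneg_left hhalf (Real.rpow_nonneg (by norm_num) _)
      nlinarith [h2, h2P, hC₀, hA0, Real.rpow_nonneg (show (0:ℝ) ≤ 2 by norm_num) p]
    · -- 1/2 < |a| : use the power test function
      set g : ℂ → ℂ := fun w => (1 - (starRingEnd ℂ) a * w) ^ cc p with hgdef
      set g' : ℂ → ℂ := fun w =>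
        cc p * (1 - (starRingEnd ℂ) a * w) ^ (cc p - 1) * -((starRingEnd ℂ) a) with hg'def
      have hder : ∀ w : ℂ, ‖w‖ < 1 → HasDerivAt g (g' w) w := fun w hw =>
        hasDerivAt_g p ha.le hw
      have hMb : ∀ w : ℂ, ‖w‖ < 1 →
          ‖g' w‖ * (1 - ‖w‖ ^ 2) ^ p ≤ M := by
        intro w hw
        rw [hg'def]
        simp only
        rw [abs_g' p ha.le hw]
        exact g'_bound p hp ha.le hw
      obtain ⟨hmem, hnorm⟩ := memBloch_single_var (n := n) (p := p) l hder hMb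
      have hg0 : ‖g 0‖ = 1 := by
        rw [hgdef]; simp [Complex.one_cpow]
      have hnorm' : blochNorm n p (fun z : Fin n → ℂ => g (z l)) ≤ 1 + M := by
        rw [hg0] at hnorm; exact hnorm
      have hcomp := H1 (fun z : Fin n → ℂ => g (z l)) hmem
      have hbs : blochSum n q (fun z => (fun z : Fin n → ℂ => g (z l)) (φ z)) z₀
          = ‖g' a‖ * A :=
        blochSum_comp_single (g := g) (g' := g' a) hφd (hder (φ z₀ l) ha)
      have habs : ‖g' a‖
          = ‖cc p‖ * ‖a‖ * ((1 - ‖a‖ ^ 2) ^ p)⁻¹ := by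
        rw [hg'def]
        simp only
        rw [abs_g' p ha.le ha, abs_g'_at_a p ha]
      have hchain : ‖g' a‖ * A ≤ C₀ * (1 + M) := by
        calc ‖g' a‖ * A
            = blochSum n q (fun z => (fun z : Fin n → ℂ => g (z l)) (φ z)) z₀ := hbs.symm
          _ ≤ sSup (blochSum n q (fun z => (fun z : Fin n → ℂ => g (z l)) (φ z)) '' polydisc n) :=
              blochSum_le_sSup hcomp.2 hz₀
          _ ≤ blochNorm n q (fun z => (fun z : Fin n → ℂ => g (z l)) (φ z)) := sSup_le_blochNorm
          _ ≤ C₀ * blochNorm n p (fun z : Fin n → ℂ => g (z l)) :=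
              H2' (fun z : Fin n → ℂ => g (z l)) hmem
          _ ≤ C₀ * (1 + M) := mul_le_mul_of_nonneg_left hnorm' hC₀
      refine le_trans ?_ (le_max_right _ _)
      rw [habs] at hchain
      have hc1 : 1 ≤ ‖cc p‖ := cc_abs p
      have hPinv : (0:ℝ) ≤ ((1 - ‖a‖ ^ 2) ^ p)⁻¹ := inv_nonneg.2 hP.le
      have hca : (1:ℝ)/2 ≤ ‖cc p‖ * ‖a‖ := by
        nlinarith [norm_nonneg a]
      have hAP : (0:ℝ) ≤ A * ((1 - ‖a‖ ^ 2) ^ p)⁻¹ := mul_nonneg hA0 hPinv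
      have hkey := mul_le_mul_of_nonneg_right hca hAP
      rw [div_eq_mul_inv]
      nlinarith [hchain, hkey, hAP]
  calc compSum n p q φ z₀
      = ∑ l : Fin n, ∑ k : Fin n, ‖fderiv ℂ φ z₀ (Pi.single k 1) l‖ *
          ((1 - ‖z₀ k‖ ^ 2) ^ q / (1 - ‖φ z₀ l‖ ^ 2) ^ p) := by
        unfold compSum; rw [Finset.sum_comm]
    _ = ∑ l : Fin n,
          (∑ k, ‖fderiv ℂ φ z₀ (Pi.single k 1) l‖ *
            (1 - ‖z₀ k‖ ^ 2) ^ q) / (1 - ‖φ z₀ l‖ ^ 2) ^ p := by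
        refine Finset.sum_congr rfl fun l _ => ?_
        rw [Finset.sum_div]
        exact Finset.sum_congr rfl fun k _ => by rw [mul_div_assoc]
    _ ≤ ∑ _l : Fin n, B := Finset.sum_le_sum fun l _ => key l
    _ = (n : ℝ) * B := by simp [Finset.sum_const, nsmul_eq_mul]

/-! ### Main theorem -/

/-- Lemma 3: boundedness of the composition operator C_φ : B^p(U^n) → B^q(U^n). -/
theorem comp_bounded_iff (n : ℕ) (p q : ℝ) (hp : 0 < p) (hq : 0 < q)
    (φ : (Fin n → ℂ) → Fin n → ℂ) (hφ : HoloSelfMap n φ) :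
    ((∀ f, MemBloch n p f → MemBloch n q (fun z => f (φ z))) ∧
      ∃ C : ℝ, ∀ f, MemBloch n p f →
        blochNorm n q (fun z => f (φ z)) ≤ C * blochNorm n p f) ↔
    ∃ C : ℝ, ∀ z ∈ polydisc n, compSum n p q φ z ≤ C := by
  constructor
  · rintro ⟨H1, C, H2⟩
    exact forward_full hp hφ H1 H2
  · rintro ⟨C, hC⟩
    exact backward_full hp hφ hC
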